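/- If G' is obtained from a graph G by contracting an edge e = uv, then the tree-independence number of G' is at most the tree-independence number of G. Consequently, if G' is an induced minor of G (obtained by vertex deletions and edge contractions), then tree-α(G') ≤ tree-α(G). -/

import Mathlib

open SimpleGraph

/-- `S` is an independent set in `G`. -/
def IsIndepOn {V : Type} (G : SimpleGraph V) (S : Set V) : Prop :=
  S.Pairwise fun u v => ¬ G.Adj u v

/-- The independence number of `G`. -/
noncomputable def indepNum {V : Type} (G : SimpleGraph V) : ℕ :=
  sSup {n | ∃ S : Set V, IsIndepOn G S ∧ S.ncard = n}

/-- The clique number of `G`. -/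
noncomputable def cliqueNumber {V : Type} (G : SimpleGraph V) : ℕ :=
  sSup {n | ∃ S : Set V, G.IsClique S ∧ S.ncard = n}

/-- A tree decomposition of a graph `G`. -/
structure TreeDecomp {V : Type} (G : SimpleGraph V) where
  ι : Type
  tree : SimpleGraph ι
  tree_isTree : tree.IsTree
  bag : ι → Set V
  mem_bag : ∀ v : V, ∃ t, v ∈ bag t
  edge_bag : ∀ ⦃u v : V⦄, G.Adj u v → ∃ t, u ∈ bag t ∧ v ∈ bag t
  bag_connected : ∀ v : V, (tree.induce {t | v ∈ bag t}).Connected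

/-- The independence number of a family of bags: the maximum independence number
of a subgraph of `G` induced by some bag. -/
noncomputable def bagAlpha {V : Type} (G : SimpleGraph V) {ι : Type} (bag : ι → Set V) : ℕ :=
  sSup {n | ∃ t, ∃ S : Set V, S ⊆ bag t ∧ IsIndepOn G S ∧ S.ncard = n}

/-- The independence number of a tree decomposition. -/
noncomputable def tdAlpha {V : Type} {G : SimpleGraph V} (td : TreeDecomp G) : ℕ :=
  bagAlpha G td.bag

/-- The width of a tree decomposition: maximum bag size minus one. -/
noncomputable def tdWidth {V : Type} {G : SimpleGraph V} (td : TreeDecomp G) : ℕ :=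
  sSup {n | ∃ t, (td.bag t).ncard = n} - 1

/-- The treewidth of `G`. -/
noncomputable def treewidth {V : Type} (G : SimpleGraph V) : ℕ :=
  sInf {w | ∃ td : TreeDecomp G, tdWidth td = w}

/-- The tree-independence number of `G`. -/
noncomputable def treeIndepNum {V : Type} (G : SimpleGraph V) : ℕ :=
  sInf {k | ∃ td : TreeDecomp G, tdAlpha td = k}

/-- A graph is chordal if it has no induced cycle of length at least four. -/
def Chordal {V : Type} (G : SimpleGraph V) : Prop :=
  ∀ n : ℕ, 4 ≤ n → IsEmpty (cycleGraph n ↪g G)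

/-- The graph obtained from `G` by contracting the edge `uv`: the vertex `v` is
removed and the new vertex resulting from the contraction is identified with `u`,
which becomes adjacent to every vertex that was adjacent to `u` or to `v`. -/
def contractEdge {V : Type} (G : SimpleGraph V) (u v : V) :
    SimpleGraph {x : V // x ≠ v} :=
  SimpleGraph.fromRel fun a b =>
    G.Adj a b ∨ (a.1 = u ∧ G.Adj v b.1) ∨ (b.1 = u ∧ G.Adj a.1 v)

/-- `G'` is an induced minor of `G`: there are disjoint nonempty connected branch sets
in `G`, one for each vertex of `G'`, such that adjacency in `G'` corresponds exactly
to the existence of an edge of `G` between the branch sets. -/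
def IsInducedMinor {V W : Type} (G : SimpleGraph V) (G' : SimpleGraph W) : Prop :=
  ∃ B : W → Set V,
    (∀ i, (B i).Nonempty) ∧
    (∀ i, (G.induce (B i)).Connected) ∧
    (∀ i j, i ≠ j → Disjoint (B i) (B j)) ∧
    (∀ i j, i ≠ j → (G'.Adj i j ↔ ∃ a ∈ B i, ∃ b ∈ B j, G.Adj a b))


lemma reach_of_sub {ι : Type} (T : SimpleGraph ι) {S U : Set ι} (h : S ⊆ U)
    {x y : S} (hr : (T.induce S).Reachable x y) :
    (T.induce U).Reachable ⟨x.1, h x.2⟩ ⟨y.1, h y.2⟩ := by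
  have := hr.map (T.induceHomOfLE h).toHom
  exact this

lemma induce_biUnion_connected {ι V : Type} (T : SimpleGraph ι) (G : SimpleGraph V)
    (A : Set V) (hA : (G.induce A).Connected) (S : V → Set ι)
    (hconn : ∀ a ∈ A, (T.induce (S a)).Connected)
    (hadj : ∀ a b, a ∈ A → b ∈ A → G.Adj a b → (S a ∩ S b).Nonempty) :
    (T.induce (⋃ a ∈ A, S a)).Connected := by
  set U : Set ι := ⋃ a ∈ A, S a with hU
  have hsub : ∀ a ∈ A, S a ⊆ U := fun a ha => Set.subset_biUnion_of_mem ha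
  have key : ∀ (a b : A) (_w : (G.induce A).Walk a b),
      ∀ x (hx : x ∈ S a.1) y (hy : y ∈ S b.1),
        (T.induce U).Reachable ⟨x, hsub a.1 a.2 hx⟩ ⟨y, hsub b.1 b.2 hy⟩ := by
    intro a b w
    induction w with
    | @nil a =>
      intro x hx y hy
      exact reach_of_sub T (hsub _ a.2) ((hconn a.1 a.2).preconnected ⟨x, hx⟩ ⟨y, hy⟩)
    | @cons a c b hac w ih =>
      intro x hx y hy
      obtain ⟨z, hz⟩ := hadj a.1 c.1 a.2 c.2 hac
      refine (reach_of_sub T (hsub _ a.2)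
        ((hconn a.1 a.2).preconnected ⟨x, hx⟩ ⟨z, hz.1⟩)).trans ?_
      exact ih z hz.2 y hy
  have hne : A.Nonempty := by
    obtain ⟨⟨a, ha⟩⟩ := hA.nonempty
    exact ⟨a, ha⟩
  obtain ⟨a0, ha0⟩ := hne
  obtain ⟨z0, hz0⟩ := (hconn a0 ha0).nonempty
  rw [connected_iff]
  refine ⟨?_, ⟨⟨z0, hsub a0 ha0 hz0⟩⟩⟩
  rintro ⟨x, hx⟩ ⟨y, hy⟩
  rw [hU] at hx hy
  simp only [Set.mem_iUnion] at hx hy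
  obtain ⟨a, ha, hx⟩ := hx
  obtain ⟨b, hb, hy⟩ := hy
  obtain ⟨w⟩ := hA.preconnected ⟨a, ha⟩ ⟨b, hb⟩
  exact key ⟨a, ha⟩ ⟨b, hb⟩ w x hx y hy

/-- The trivial tree decomposition. -/
def trivialTD {V : Type} (G : SimpleGraph V) : TreeDecomp G where
  ι := Unit
  tree := ⊥
  tree_isTree := ⟨by
    rw [connected_iff]
    exact ⟨fun a b => by rw [Subsingleton.elim a b], ⟨()⟩⟩, isAcyclic_bot⟩
  bag _ := Set.univ
  mem_bag v := ⟨(), Set.mem_univ v⟩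
  edge_bag u v _ := ⟨(), trivial, trivial⟩
  bag_connected v := by
    rw [connected_iff]
    exact ⟨fun a b => by rw [Subsingleton.elim a b], ⟨⟨(), trivial⟩⟩⟩

/-- Push a tree decomposition of `G` to one of an induced minor `G'`. -/
noncomputable def pushTD {V W : Type} {G : SimpleGraph V} {G' : SimpleGraph W}
    (B : W → Set V) (hne : ∀ i, (B i).Nonempty)
    (hconn : ∀ i, (G.induce (B i)).Connected)
    (hadj : ∀ i j, i ≠ j → (G'.Adj i j ↔ ∃ a ∈ B i, ∃ b ∈ B j, G.Adj a b))
    (td : TreeDecomp G) : TreeDecomp G' where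
  ι := td.ι
  tree := td.tree
  tree_isTree := td.tree_isTree
  bag t := {w | (B w ∩ td.bag t).Nonempty}
  mem_bag w := by
    obtain ⟨a, ha⟩ := hne w
    obtain ⟨t, ht⟩ := td.mem_bag a
    exact ⟨t, a, ha, ht⟩
  edge_bag i j hij := by
    obtain ⟨a, ha, b, hb, hab⟩ := (hadj i j hij.ne).mp hij
    obtain ⟨t, ht1, ht2⟩ := td.edge_bag hab
    exact ⟨t, ⟨a, ha, ht1⟩, ⟨b, hb, ht2⟩⟩
  bag_connected w := by
    have h := induce_biUnion_connected td.tree G (B w) (hconn w)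
      (fun a => {t | a ∈ td.bag t})
      (fun a _ => td.bag_connected a)
      (fun a b _ _ hGab => by
        obtain ⟨t, h1, h2⟩ := td.edge_bag hGab
        exact ⟨t, h1, h2⟩)
    have hs : {t | w ∈ {w | (B w ∩ td.bag t).Nonempty}} = ⋃ a ∈ B w, {t | a ∈ td.bag t} := by
      ext t
      simp [Set.Nonempty, Set.mem_inter_iff]
    rw [hs]
    exact h

lemma tdAlpha_pushTD_le {V W : Type} [Fintype V] {G : SimpleGraph V} {G' : SimpleGraph W}
    (B : W → Set V) (hne : ∀ i, (B i).Nonempty)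
    (hconn : ∀ i, (G.induce (B i)).Connected)
    (hdisj : ∀ i j, i ≠ j → Disjoint (B i) (B j))
    (hadj : ∀ i j, i ≠ j → (G'.Adj i j ↔ ∃ a ∈ B i, ∃ b ∈ B j, G.Adj a b))
    (td : TreeDecomp G) :
    tdAlpha (pushTD B hne hconn hadj td) ≤ tdAlpha td := by
  have hbdd : BddAbove {n | ∃ t, ∃ S : Set V, S ⊆ td.bag t ∧ IsIndepOn G S ∧ S.ncard = n} := by
    refine ⟨Fintype.card V, ?_⟩
    rintro n ⟨t, S, _, _, rfl⟩
    calc S.ncard ≤ (Set.univ : Set V).ncard :=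
          Set.ncard_le_ncard (Set.subset_univ S) Set.finite_univ
      _ = Fintype.card V := by rw [Set.ncard_univ, Nat.card_eq_fintype_card]
  have hne0 : {n | ∃ t, ∃ S : Set W, S ⊆ (pushTD B hne hconn hadj td).bag t ∧
      IsIndepOn G' S ∧ S.ncard = n}.Nonempty := by
    obtain ⟨t⟩ := td.tree_isTree.1.nonempty
    exact ⟨0, t, ∅, Set.empty_subset _, Set.pairwise_empty _, Set.ncard_empty _⟩
  apply csSup_le_csSup hbdd hne0
  rintro n ⟨t, S', hS', hind, rfl⟩
  classical
  set f : W → V := fun w =>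
    if h : (B w ∩ td.bag t).Nonempty then h.choose else (hne w).choose with hf
  have hfB : ∀ w, f w ∈ B w := by
    intro w
    rw [hf]
    by_cases h : (B w ∩ td.bag t).Nonempty
    · simp only [dif_pos h]; exact h.choose_spec.1
    · simp only [dif_neg h]; exact (hne w).choose_spec
  have hfbag : ∀ w ∈ S', f w ∈ td.bag t := by
    intro w hw
    have h : (B w ∩ td.bag t).Nonempty := hS' hw
    rw [hf]
    simp only [dif_pos h]
    exact h.choose_spec.2
  have hinj : Set.InjOn f S' := by
    intro w _ w' _ heq
    by_contra hww
    exact (hdisj w w' hww).ne_of_mem (hfB w) (hfB w') heq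
  refine ⟨t, f '' S', ?_, ?_, ?_⟩
  · rintro x ⟨w, hw, rfl⟩; exact hfbag w hw
  · rintro x ⟨w, hw, rfl⟩ y ⟨w', hw', rfl⟩ hxy hGadj
    have hww : w ≠ w' := by rintro rfl; exact hxy rfl
    have : G'.Adj w w' := (hadj w w' hww).mpr ⟨f w, hfB w, f w', hfB w', hGadj⟩
    exact hind hw hw' hww this
  · exact Set.ncard_image_of_injOn hinj

lemma treeIndepNum_le_of_isInducedMinor {V W : Type} [Fintype V]
    (G : SimpleGraph V) (G' : SimpleGraph W)
    (h : IsInducedMinor G G') : treeIndepNum G' ≤ treeIndepNum G := by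
  obtain ⟨B, hne, hconn, hdisj, hadj⟩ := h
  have hset : {k | ∃ td : TreeDecomp G, tdAlpha td = k}.Nonempty := ⟨_, trivialTD G, rfl⟩
  obtain ⟨td, htd⟩ := Nat.sInf_mem hset
  calc treeIndepNum G' ≤ tdAlpha (pushTD B hne hconn hadj td) :=
        Nat.sInf_le ⟨_, rfl⟩
    _ ≤ tdAlpha td := tdAlpha_pushTD_le B hne hconn hdisj hadj td
    _ = treeIndepNum G := htd


lemma induce_pair_connected {V : Type} {G : SimpleGraph V} {u v : V} (huv : G.Adj u v) :
    (G.induce {u, v}).Connected := by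
  rw [connected_iff]
  refine ⟨?_, ⟨⟨u, Or.inl rfl⟩⟩⟩
  have hadj : (G.induce {u, v}).Adj ⟨u, Or.inl rfl⟩ ⟨v, Or.inr rfl⟩ := huv
  rintro ⟨x, hx⟩ ⟨y, hy⟩
  rcases hx with rfl | rfl <;> rcases hy with rfl | rfl
  · rfl
  · exact hadj.reachable
  · exact hadj.symm.reachable
  · rfl

lemma contract_isInducedMinor {V : Type} (G : SimpleGraph V) (u v : V) (huv : G.Adj u v) :
    IsInducedMinor G (contractEdge G u v) := by
  classical
  have huvne : u ≠ v := huv.ne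
  refine ⟨fun w => if w.1 = u then {u, v} else {w.1}, ?_, ?_, ?_, ?_⟩
  · intro i
    by_cases h : i.1 = u <;> simp [h]
  · intro i
    dsimp only
    by_cases h : i.1 = u
    · rw [if_pos h]
      exact induce_pair_connected huv
    · rw [if_neg h, connected_iff]
      exact ⟨fun a b => by rw [Subsingleton.elim a b], ⟨⟨i.1, rfl⟩⟩⟩
  · intro i j hij
    dsimp only
    by_cases hi : i.1 = u <;> by_cases hj : j.1 = u
    · exact absurd (Subtype.ext (hi.trans hj.symm)) hij
    · rw [if_pos hi, if_neg hj]
      rw [Set.disjoint_right]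
      rintro x rfl
      simp only [Set.mem_insert_iff, Set.mem_singleton_iff]
      push_neg
      exact ⟨hj, j.2⟩
    · rw [if_neg hi, if_pos hj]
      rw [Set.disjoint_left]
      rintro x rfl
      simp only [Set.mem_insert_iff, Set.mem_singleton_iff]
      push_neg
      exact ⟨hi, i.2⟩
    · rw [if_neg hi, if_neg hj, Set.disjoint_singleton]
      exact fun h => hij (Subtype.ext h)
  · intro i j hij
    have hij1 : i.1 ≠ j.1 := fun h => hij (Subtype.ext h)
    dsimp only
    rw [contractEdge, fromRel_adj]
    by_cases hi : i.1 = u <;> by_cases hj : j.1 = u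
    · exact absurd (hi.trans hj.symm) hij1
    · simp only [if_pos hi, if_neg hj, Set.mem_insert_iff, Set.mem_singleton_iff]
      constructor
      · rintro ⟨-, (h | ⟨-, h⟩ | ⟨h, -⟩) | (h | ⟨h', h⟩ | ⟨-, h⟩)⟩
        · exact ⟨i.1, Or.inl hi, j.1, rfl, h⟩
        · exact ⟨v, Or.inr rfl, j.1, rfl, h⟩
        · exact absurd h hj
        · exact ⟨i.1, Or.inl hi, j.1, rfl, h.symm⟩
        · exact absurd h' hj
        · exact ⟨v, Or.inr rfl, j.1, rfl, h.symm⟩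
      · rintro ⟨a, (rfl | rfl), b, rfl, hab⟩
        · exact ⟨hij, Or.inl (Or.inl (hi ▸ hab))⟩
        · exact ⟨hij, Or.inl (Or.inr (Or.inl ⟨hi, hab⟩))⟩
    · simp only [if_neg hi, if_pos hj, Set.mem_insert_iff, Set.mem_singleton_iff]
      constructor
      · rintro ⟨-, (h | ⟨h', -⟩ | ⟨-, h⟩) | (h | ⟨-, h⟩ | ⟨h', -⟩)⟩
        · exact ⟨i.1, rfl, j.1, Or.inl hj, h⟩
        · exact absurd h' hi
        · exact ⟨i.1, rfl, v, Or.inr rfl, h⟩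
        · exact ⟨i.1, rfl, j.1, Or.inl hj, h.symm⟩
        · exact ⟨i.1, rfl, v, Or.inr rfl, h.symm⟩
        · exact absurd h' hi
      · rintro ⟨a, rfl, b, (rfl | rfl), hab⟩
        · exact ⟨hij, Or.inl (Or.inl (hj ▸ hab))⟩
        · exact ⟨hij, Or.inl (Or.inr (Or.inr ⟨hj, hab⟩))⟩
    · simp only [if_neg hi, if_neg hj, Set.mem_singleton_iff]
      constructor
      · rintro ⟨-, (h | ⟨h', -⟩ | ⟨h', -⟩) | (h | ⟨h', -⟩ | ⟨h', -⟩)⟩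
        · exact ⟨i.1, rfl, j.1, rfl, h⟩
        · exact absurd h' hi
        · exact absurd h' hj
        · exact ⟨i.1, rfl, j.1, rfl, h.symm⟩
        · exact absurd h' hj
        · exact absurd h' hi
      · rintro ⟨a, rfl, b, rfl, hab⟩
        exact ⟨hij, Or.inl (Or.inl hab)⟩

theorem stmt11 {V : Type} [Fintype V] :
    (∀ (G : SimpleGraph V) (u v : V), G.Adj u v →
      treeIndepNum (contractEdge G u v) ≤ treeIndepNum G) ∧
    (∀ (W : Type) [Fintype W] (G : SimpleGraph V) (G' : SimpleGraph W),
      IsInducedMinor G G' → treeIndepNum G' ≤ treeIndepNum G) := by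
  constructor
  · intro G u v huv
    haveI : Fintype {x : V // x ≠ v} := by classical exact Subtype.fintype _
    exact treeIndepNum_le_of_isInducedMinor G _ (contract_isInducedMinor G u v huv)
  · intro W _ G G' h
    exact treeIndepNum_le_of_isInducedMinor G G' h
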